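/- Let $R$ be a commutative ring, $M$ an $R$-module, and $e \in R$ an idempotent with $e \neq 0, 1$. Then every prime submodule of $M = eM \oplus (1-e)M$ is of the form $P \oplus (1-e)M$ for a prime submodule $P$ of the $eR$-module $eM$, or of the form $eM \oplus Q$ for a prime submodule $Q$ of the $(1-e)R$-module $(1-e)M$. -/

import Mathlib

open Submodule

section Defs
variable (R : Type*) [CommRing R] {M : Type*} [AddCommGroup M] [Module R M]

/-- `(N : M)`, the colon ideal of a submodule with the whole module. -/
def colonTop (N : Submodule R M) : Ideal R := N.colon ⊤

variable {R}

/-- A prime submodule. -/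
def IsPrimeSubmodule (P : Submodule R M) : Prop :=
  P ≠ ⊤ ∧ ∀ (r : R) (m : M), r • m ∈ P → r ∈ colonTop R P ∨ m ∈ P

/-- The prime spectrum of a module, as a set of submodules. -/
def specSet (R : Type*) [CommRing R] (M : Type*) [AddCommGroup M] [Module R M] :
    Set (Submodule R M) := {P | IsPrimeSubmodule P}

/-- `V(N)`. -/
def Vset (N : Submodule R M) : Set (Submodule R M) :=
  {P | IsPrimeSubmodule P ∧ colonTop R N ≤ colonTop R P}

/-- `V^*(N)`. -/
def VstarSet (N : Submodule R M) : Set (Submodule R M) :=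
  {P | IsPrimeSubmodule P ∧ N ≤ P}

/-- The product `NK = (N:M)(K:M)M` of two submodules. -/
def prodSub (N K : Submodule R M) : Submodule R M :=
  (colonTop R N * colonTop R K) • (⊤ : Submodule R M)

/-- The prime radical of a submodule. -/
def radicalSub (N : Submodule R M) : Submodule R M :=
  sInf {P | IsPrimeSubmodule P ∧ N ≤ P}

/-- Adjacency in the Zariski topology-graph `G(τ_T)`. -/
def ZAdj (T : Set (Submodule R M)) (N L : Submodule R M) : Prop :=
  N ≠ L ∧ N ≠ ⊤ ∧ L ≠ ⊤ ∧ Vset N ∪ Vset L = T ∧ Vset N ≠ T ∧ Vset L ≠ T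

/-- Vertices of the Zariski topology-graph `G(τ_T)`. -/
def ZVertex (T : Set (Submodule R M)) (N : Submodule R M) : Prop :=
  ∃ K, ZAdj T N K

/-- The Zariski topology-graph `G(τ_T)` as a simple graph on its vertex set. -/
def ZGraph (T : Set (Submodule R M)) : SimpleGraph {N : Submodule R M // ZVertex T N} where
  Adj a b := ZAdj T a.1 b.1
  symm := ⟨by
    rintro a b ⟨h1, h2, h3, h4, h5, h6⟩
    exact ⟨h1.symm, h3, h2, by rwa [Set.union_comm], h6, h5⟩⟩
  loopless := ⟨by rintro a ⟨h1, -⟩; exact h1 rfl⟩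

end Defs
section Extra
variable {R : Type*} [CommRing R] {M : Type*} [AddCommGroup M] [Module R M]

/-- Prime submodule of a submodule `W`, internal version (i.e. a prime submodule of the
module `W`). -/
def IsPrimeIn (W P : Submodule R M) : Prop :=
  P < W ∧ ∀ (r : R) (m : M), m ∈ W → r • m ∈ P → (∀ x ∈ W, r • x ∈ P) ∨ m ∈ P

/-- The prime radical of `N` computed inside the submodule `W`. -/
def radicalIn (W N : Submodule R M) : Submodule R M :=
  sInf {P | IsPrimeIn W P ∧ N ≤ P} ⊓ W

/-- Vertices of the graph `AG(M)^*`. -/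
def AGstarVertex (N : Submodule R M) : Prop :=
  N ≠ ⊤ ∧ colonTop R N ≠ Module.annihilator R M ∧
    ∃ K, K ≠ ⊤ ∧ colonTop R K ≠ Module.annihilator R M ∧ prodSub N K = ⊥

/-- Adjacency in the graph `AG(M)^*`. -/
def AGstarAdj (N L : Submodule R M) : Prop :=
  N ≠ L ∧ AGstarVertex N ∧ AGstarVertex L ∧ prodSub N L = ⊥

/-- The clique number of a graph, valued in `ℕ∞`. -/
noncomputable def cliqueNumE {V : Type*} (G : SimpleGraph V) : ℕ∞ :=
  ⨆ n ∈ {n : ℕ | ∃ s, G.IsNClique n s}, (n : ℕ∞)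

end Extra

section Aux
variable {R : Type*} [CommRing R] {M : Type*} [AddCommGroup M] [Module R M]

lemma aux_mem (e : R) (he : IsIdempotentElem e) (x : M) :
    x ∈ Ideal.span {e} • (⊤ : Submodule R M) ↔ e • x = x := by
  constructor
  · intro hx
    refine Submodule.smul_induction_on hx ?_ ?_
    · intro r hr m _
      obtain ⟨c, rfl⟩ := Ideal.mem_span_singleton.mp hr
      rw [← mul_smul, ← mul_assoc, he.eq]
    · intro a b ha hb
      rw [smul_add, ha, hb]
  · intro h
    rw [← h]
    exact Submodule.smul_mem_smul (Ideal.mem_span_singleton_self e) trivial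

lemma aux_case (e : R) (he : IsIdempotentElem e) (M1 M2 P : Submodule R M)
    (hM1 : M1 = Ideal.span {e} • (⊤ : Submodule R M))
    (hM2 : M2 = Ideal.span {1 - e} • (⊤ : Submodule R M))
    (hP : IsPrimeSubmodule P) (h : (1 - e) ∈ colonTop R P) :
    M2 ≤ P ∧ IsPrimeIn M1 (P ⊓ M1) ∧ P = (P ⊓ M1) ⊔ M2 := by
  have hcol : ∀ x : M, (1 - e) • x ∈ P := fun x =>
    Submodule.mem_colon.mp h x trivial
  have hM2P : M2 ≤ P := by
    intro x hx
    rw [hM2, aux_mem (1 - e) he.one_sub] at hx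
    rw [← hx]; exact hcol x
  have hsplit : ∀ x : M, x = e • x + (1 - e) • x := by
    intro x
    rw [← add_smul, add_sub_cancel, one_smul]
  have hM1nle : ¬ M1 ≤ P := by
    intro hle
    apply hP.1
    rw [eq_top_iff]
    intro x _
    rw [hsplit x]
    refine add_mem (hle ?_) (hcol x)
    rw [hM1, aux_mem e he, ← mul_smul, he.eq]
  refine ⟨hM2P, ⟨?_, ?_⟩, ?_⟩
  · exact lt_of_le_of_ne inf_le_right fun heq =>
      hM1nle ((le_of_eq heq.symm).trans inf_le_left)
  · intro r m hmM1 hrm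
    rcases hP.2 r m hrm.1 with hr | hm
    · left
      intro x hx
      exact ⟨Submodule.mem_colon.mp hr x trivial, M1.smul_mem r hx⟩
    · exact Or.inr ⟨hm, hmM1⟩
  · refine le_antisymm ?_ (sup_le inf_le_left hM2P)
    intro p hp
    rw [hsplit p]
    have h1 : e • p ∈ M1 := by rw [hM1, aux_mem e he, ← mul_smul, he.eq]
    have h2 : (1 - e) • p ∈ M2 := by
      rw [hM2, aux_mem (1 - e) he.one_sub, ← mul_smul, he.one_sub.eq]
    exact Submodule.add_mem_sup ⟨P.smul_mem e hp, h1⟩ h2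

end Aux
/-- prime submodules of `M = eM ⊕ (1-e)M` are of the form `P ⊕ (1-e)M`
with `P` prime in `eM`, or `eM ⊕ Q` with `Q` prime in `(1-e)M`. -/
theorem stmt1 {R : Type*} [CommRing R] {M : Type*} [AddCommGroup M] [Module R M]
    (e : R) (he : IsIdempotentElem e) (he0 : e ≠ 0) (he1 : e ≠ 1)
    (M1 M2 : Submodule R M)
    (hM1 : M1 = Ideal.span {e} • (⊤ : Submodule R M))
    (hM2 : M2 = Ideal.span {1 - e} • (⊤ : Submodule R M))
    (P : Submodule R M) (hP : IsPrimeSubmodule P) :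
    (M2 ≤ P ∧ IsPrimeIn M1 (P ⊓ M1) ∧ P = (P ⊓ M1) ⊔ M2) ∨
      (M1 ≤ P ∧ IsPrimeIn M2 (P ⊓ M2) ∧ P = M1 ⊔ (P ⊓ M2)) := by
  by_cases h : e ∈ colonTop R P
  · right
    have hM1' : M1 = Ideal.span {1 - (1 - e)} • (⊤ : Submodule R M) := by
      rwa [sub_sub_cancel]
    have h' : (1 - (1 - e)) ∈ colonTop R P := by rwa [sub_sub_cancel]
    obtain ⟨h1, h2, h3⟩ := aux_case (1 - e) he.one_sub M2 M1 P hM2 hM1' hP h'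
    exact ⟨h1, h2, by rwa [sup_comm] at h3⟩
  · left
    have h' : (1 - e) ∈ colonTop R P := by
      rw [colonTop, Submodule.mem_colon]
      intro m _
      have h0 : e • ((1 - e) • m) ∈ P := by
        rw [← mul_smul, mul_sub, mul_one, he.eq, sub_self, zero_smul]
        exact P.zero_mem
      rcases hP.2 e ((1 - e) • m) h0 with hc | hm
      · exact absurd hc h
      · exact hm
    exact aux_case e he M1 M2 P hM1 hM2 hP h'
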